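/- If C is a sum closed permutation class, then the sequence (|C_n|) is supermultiplicative, i.e., |C_m| · |C_n| ≤ |C_{m+n}| for all m, n ≥ 1, and consequently the limit lim_{n→∞} |C_n|^{1/n} exists in [0, +∞] and equals sup_{n≥1} |C_n|^{1/n}; in particular every sum closed permutation class has a (possibly infinite) growth rate. -/

import Mathlib

open Filter

/-- A permutation of some finite length `n`. -/
abbrev Permu : Type := Σ n : ℕ, Equiv.Perm (Fin n)

/-- `PLe σ π` : the permutation `σ` is contained in `π` as a pattern. -/
def PLe (σ π : Permu) : Prop :=
  ∃ f : Fin σ.1 → Fin π.1, StrictMono f ∧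
    ∀ i j : Fin σ.1, σ.2 i < σ.2 j ↔ π.2 (f i) < π.2 (f j)

/-- A permutation class: a set of permutations closed downward under containment. -/
def IsPermClass (C : Set Permu) : Prop :=
  ∀ σ π : Permu, PLe σ π → π ∈ C → σ ∈ C

/-- The number of permutations of length `n` in `C`. -/
noncomputable def pcount (C : Set Permu) (n : ℕ) : ℕ :=
  Set.ncard {π ∈ C | π.1 = n}

/-- The upper growth rate of a class, as an extended real. -/
noncomputable def ugr (C : Set Permu) : EReal :=
  limsup (fun n : ℕ => (((pcount C n : ℝ) ^ ((n : ℝ)⁻¹) : ℝ) : EReal)) atTop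

/-- The lower growth rate of a class, as an extended real. -/
noncomputable def lgr (C : Set Permu) : EReal :=
  liminf (fun n : ℕ => (((pcount C n : ℝ) ^ ((n : ℝ)⁻¹) : ℝ) : EReal)) atTop
/-- The direct sum of two permutations, on underlying finite types. -/
def permSum {m n : ℕ} (π : Equiv.Perm (Fin m)) (σ : Equiv.Perm (Fin n)) :
    Equiv.Perm (Fin (m + n)) :=
  finSumFinEquiv.symm.trans ((Equiv.sumCongr π σ).trans finSumFinEquiv)

/-- The sum `π ⊕ σ` of two permutations. -/
def psum (π σ : Permu) : Permu := ⟨π.1 + σ.1, permSum π.2 σ.2⟩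

/-- The skew sum of two permutations, on underlying finite types. -/
def permSkew {m n : ℕ} (π : Equiv.Perm (Fin m)) (σ : Equiv.Perm (Fin n)) :
    Equiv.Perm (Fin (m + n)) :=
  finSumFinEquiv.symm.trans ((Equiv.sumCongr π σ).trans
    (((Equiv.sumComm (Fin m) (Fin n)).trans finSumFinEquiv).trans (finCongr (Nat.add_comm n m))))

/-- The skew sum `π ⊖ σ` of two permutations. -/
def pskew (π σ : Permu) : Permu := ⟨π.1 + σ.1, permSkew π.2 σ.2⟩

/-- A set of permutations is sum closed if it is closed under `⊕`. -/
def SumClosed (C : Set Permu) : Prop := ∀ π σ : Permu, π ∈ C → σ ∈ C → psum π σ ∈ C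

/-- A set of permutations is skew closed if it is closed under `⊖`. -/
def SkewClosed (C : Set Permu) : Prop := ∀ π σ : Permu, π ∈ C → σ ∈ C → pskew π σ ∈ C

/-- A permutation is sum indecomposable if it is not the sum of two nonempty permutations. -/
def SumIndec (τ : Permu) : Prop := ¬ ∃ π σ : Permu, 0 < π.1 ∧ 0 < σ.1 ∧ τ = psum π σ

/-- A permutation is skew indecomposable if it is not the skew sum of two nonempty
permutations. -/
def SkewIndec (τ : Permu) : Prop := ¬ ∃ π σ : Permu, 0 < π.1 ∧ 0 < σ.1 ∧ τ = pskew π σ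

/-- `Sub π` : the class of all permutations contained in `π`. -/
def SubCl (π : Permu) : Set Permu := {σ | PLe σ π}

/-- The sum closure of a set of permutations: the smallest sum closed class containing it. -/
def sumClosure (C : Set Permu) : Set Permu :=
  ⋂₀ {D : Set Permu | IsPermClass D ∧ SumClosed D ∧ C ⊆ D}

/-- The skew closure of a set of permutations: the smallest skew closed class containing it. -/
def skewClosure (C : Set Permu) : Set Permu :=
  ⋂₀ {D : Set Permu | IsPermClass D ∧ SkewClosed D ∧ C ⊆ D}

/-- The cell class `G_γ`: permutations `π` with `gr(⊕Sub(π)) < γ` or `gr(⊖Sub(π)) < γ`.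
(These growth rates exist, so they coincide with the upper growth rates used here.) -/
noncomputable def cellClass (γ : ℝ) : Set Permu :=
  {π | ugr (sumClosure (SubCl π)) < (γ : EReal) ∨ ugr (skewClosure (SubCl π)) < (γ : EReal)}
section FeketeAux
open Topology

lemma slice_finite (C : Set Permu) (n : ℕ) : {π ∈ C | π.1 = n}.Finite := by
  apply Set.Finite.subset
    (Set.finite_range (fun p : Equiv.Perm (Fin n) => (⟨n, p⟩ : Permu)))
  rintro ⟨m, p⟩ ⟨-, rfl⟩
  exact ⟨p, rfl⟩

lemma permSum_inj {m n : ℕ} {p p' : Equiv.Perm (Fin m)} {s s' : Equiv.Perm (Fin n)}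
    (h : permSum p s = permSum p' s') : p = p' ∧ s = s' := by
  have key : ∀ x, Sum.map (⇑p) (⇑s) x = Sum.map (⇑p') (⇑s') x := by
    intro x
    have h1 := DFunLike.congr_fun h (finSumFinEquiv x)
    simp only [permSum, Equiv.trans_apply, Equiv.symm_apply_apply,
      Equiv.sumCongr_apply] at h1
    exact finSumFinEquiv.injective (by simpa using h1)
  constructor
  · ext i
    rw [show p i = p' i by simpa using key (Sum.inl i)]
  · ext i
    rw [show s i = s' i by simpa using key (Sum.inr i)]

lemma supermult (C : Set Permu) (hsum : SumClosed C) (m n : ℕ) :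
    pcount C m * pcount C n ≤ pcount C (m + n) := by
  set Sm := {π ∈ C | π.1 = m} with hSm
  set Sn := {π ∈ C | π.1 = n} with hSn
  set St := {π ∈ C | π.1 = m + n} with hSt
  have : Finite ↥St := (slice_finite C (m+n)).to_subtype
  let F : ↥Sm × ↥Sn → ↥St := fun x =>
    ⟨psum x.1.1 x.2.1, hsum _ _ x.1.2.1 x.2.2.1, by
      show (psum x.1.1 x.2.1).1 = m + n
      have h1 := x.1.2.2
      have h2 := x.2.2.2
      simp [psum, h1, h2]⟩
  have hF : Function.Injective F := by
    rintro ⟨⟨π, hπ⟩, ⟨σ, hσ⟩⟩ ⟨⟨π', hπ'⟩, ⟨σ', hσ'⟩⟩ h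
    simp only [F, Subtype.mk.injEq, Prod.mk.injEq] at h ⊢
    obtain ⟨mp, hp⟩ := π; obtain ⟨mp', hp'⟩ := π'
    obtain ⟨ns, hs⟩ := σ; obtain ⟨ns', hs'⟩ := σ'
    have e1 : mp = m := hπ.2
    have e2 : mp' = m := hπ'.2
    have e3 : ns = n := hσ.2
    have e4 : ns' = n := hσ'.2
    subst e1 e3; subst e2; subst e4
    have h2 : permSum hp hs = permSum hp' hs' := by
      simpa [psum] using h
    obtain ⟨h5, h6⟩ := permSum_inj h2
    simp [h5, h6]
  calc pcount C m * pcount C n = Nat.card (↥Sm × ↥Sn) := by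
        rw [Nat.card_prod, Nat.card_coe_set_eq, Nat.card_coe_set_eq]; rfl
    _ ≤ Nat.card ↥St := Nat.card_le_card_of_injective F hF
    _ = pcount C (m + n) := by rw [Nat.card_coe_set_eq]; rfl

-- if pcount C 1 = 0 then pcount C n = 0 for all n ≥ 1
lemma pcount_zero (C : Set Permu) (hC : IsPermClass C) (h1 : pcount C 1 = 0)
    {n : ℕ} (hn : 1 ≤ n) : pcount C n = 0 := by
  rw [pcount, Set.ncard_eq_zero (slice_finite C n), Set.eq_empty_iff_forall_notMem]
  rintro π ⟨hπC, hπn⟩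
  have hone : (⟨1, 1⟩ : Permu) ∈ C := by
    apply hC _ π _ hπC
    refine ⟨fun _ => ⟨0, by omega⟩, ?_, ?_⟩
    · intro i j hij
      exact absurd (Subsingleton.elim i j) (ne_of_lt hij)
    · intro i j
      rw [Subsingleton.elim i j]
      simp
  have hmem : (⟨1,1⟩ : Permu) ∈ {π ∈ C | π.1 = 1} := ⟨hone, rfl⟩
  exact Set.ncard_ne_zero_of_mem hmem (slice_finite C 1) h1


lemma fekete (a : ℕ → ℕ)
    (hsuper : ∀ m n, 1 ≤ m → 1 ≤ n → a m * a n ≤ a (m + n)) (h1 : 1 ≤ a 1) :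
    Tendsto (fun n : ℕ => (((a n : ℝ) ^ ((n : ℝ)⁻¹) : ℝ) : EReal)) atTop
      (nhds (⨆ n ∈ Set.Ici (1 : ℕ), (((a n : ℝ) ^ ((n : ℝ)⁻¹) : ℝ) : EReal))) := by
  set f : ℕ → EReal := fun n => (((a n : ℝ) ^ ((n : ℝ)⁻¹) : ℝ) : EReal) with hf
  set L : EReal := ⨆ n ∈ Set.Ici (1 : ℕ), f n with hL
  have hpos : ∀ n, 1 ≤ n → 1 ≤ a n := by
    intro n hn
    induction n with
    | zero => omega
    | succ m ih =>
      rcases Nat.eq_zero_or_pos m with rfl | hm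
      · exact h1
      · have h2 := Nat.mul_le_mul (ih hm) h1
        simpa using h2.trans (hsuper m 1 hm le_rfl)
  have hpow : ∀ k q, 1 ≤ k → 1 ≤ q → a k ^ q ≤ a (k * q) := by
    intro k q hk hq
    induction q with
    | zero => omega
    | succ r ih =>
      rcases Nat.eq_zero_or_pos r with rfl | hr
      · simpa using le_rfl
      · calc a k ^ (r + 1) = a k ^ r * a k := by ring
          _ ≤ a (k * r) * a k := Nat.mul_le_mul_right _ (ih hr)
          _ ≤ a (k * r + k) := hsuper _ _ (by simpa using Nat.mul_le_mul hk hr) hk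
          _ = a (k * (r + 1)) := by rw [Nat.mul_succ]
  have hdiv : ∀ k n, 1 ≤ k → k ≤ n → a k ^ (n / k) ≤ a n := by
    intro k n hk hkn
    have hq : 1 ≤ n / k := (Nat.one_le_div_iff (by omega)).2 hkn
    have h0 := hpow k (n / k) hk hq
    rcases Nat.eq_zero_or_pos (n % k) with hr | hr
    · have heq := Nat.div_add_mod n k
      have he : k * (n / k) = n := by omega
      rwa [he] at h0
    · have heq : k * (n / k) + n % k = n := Nat.div_add_mod n k
      calc a k ^ (n / k) ≤ a (k * (n / k)) := h0
        _ ≤ a (k * (n / k)) * a (n % k) := Nat.le_mul_of_pos_right _ (hpos _ hr)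
        _ ≤ a (k * (n / k) + n % k) := hsuper _ _ (by simpa using Nat.mul_le_mul hk hq) hr
        _ = a n := by rw [heq]
  have claim1 : ∀ k, 1 ≤ k → f k ≤ liminf f atTop := by
    intro k hk
    set c : ℝ := (a k : ℝ) with hc
    have hc1 : (1 : ℝ) ≤ c := by rw [hc]; exact_mod_cast hpos k hk
    have hk0 : (0 : ℝ) < k := by exact_mod_cast hk
    set e : ℕ → ℝ := fun n => (↑(n / k) : ℝ) / n with he
    have tendsto_e : Tendsto e atTop (𝓝 ((k : ℝ)⁻¹)) := by
      apply tendsto_of_tendsto_of_tendsto_of_le_of_le'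
        (g := fun n : ℕ => (k : ℝ)⁻¹ - (n : ℝ)⁻¹) (h := fun _ : ℕ => (k : ℝ)⁻¹)
      · simpa using tendsto_const_nhds.sub (tendsto_inv_atTop_nhds_zero_nat (𝕜 := ℝ))
      · exact tendsto_const_nhds
      · filter_upwards [eventually_ge_atTop 1] with n hn
        have hn0 : (0 : ℝ) < n := by exact_mod_cast hn
        have hlt : (n : ℝ) < k * ↑(n / k) + k := by
          have hh1 : k * (n / k) + n % k = n := Nat.div_add_mod n k
          have hh2 : (↑(n % k) : ℝ) < k := by exact_mod_cast Nat.mod_lt n (by omega)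
          have hh3 : (k : ℝ) * ↑(n / k) + ↑(n % k) = n := by exact_mod_cast hh1
          linarith
        have key : (n : ℝ) / k - 1 ≤ ↑(n / k) := by
          rw [sub_le_iff_le_add, div_le_iff₀ hk0]
          nlinarith
        have heq2 : (k : ℝ)⁻¹ - (n : ℝ)⁻¹ = ((n : ℝ) / k - 1) / n := by
          field_simp
        rw [heq2]
        show ((n : ℝ) / k - 1) / n ≤ (↑(n / k) : ℝ) / n
        gcongr
      · filter_upwards [eventually_ge_atTop 1] with n hn
        have hn0 : (0 : ℝ) < n := by exact_mod_cast hn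
        have key : (↑(n / k) : ℝ) ≤ (n : ℝ) / k := by
          rw [le_div_iff₀ hk0]
          exact_mod_cast Nat.div_mul_le_self n k
        show (↑(n / k) : ℝ) / n ≤ (k : ℝ)⁻¹
        calc (↑(n / k) : ℝ) / n ≤ ((n : ℝ) / k) / n := by gcongr
          _ = (k : ℝ)⁻¹ := by
            field_simp
    have tendsto_g : Tendsto (fun n => c ^ e n) atTop (𝓝 (c ^ (k : ℝ)⁻¹)) :=
      (tendsto_const_nhds.rpow tendsto_e (Or.inl (by positivity)))
    have hle : ∀ᶠ n in atTop, ((c ^ e n : ℝ) : EReal) ≤ f n := by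
      filter_upwards [eventually_ge_atTop k] with n hn
      have hn1 : 1 ≤ n := le_trans hk hn
      have h2 : (c ^ (n / k) : ℝ) ≤ (a n : ℝ) := by
        rw [hc]
        exact_mod_cast hdiv k n hk hn
      have h3 : c ^ e n ≤ (a n : ℝ) ^ ((n : ℝ)⁻¹) := by
        have hrw : c ^ e n = ((c ^ (n / k) : ℝ)) ^ ((n : ℝ)⁻¹) := by
          rw [← Real.rpow_natCast c (n / k), ← Real.rpow_mul (by positivity)]
          congr 1
        rw [hrw]
        exact Real.rpow_le_rpow (by positivity) h2 (by positivity)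
      exact EReal.coe_le_coe_iff.2 h3
    calc f k = ((c ^ (k : ℝ)⁻¹ : ℝ) : EReal) := rfl
      _ = liminf (fun n => ((c ^ e n : ℝ) : EReal)) atTop :=
        ((EReal.tendsto_coe.2 tendsto_g).liminf_eq).symm
      _ ≤ liminf f atTop := liminf_le_liminf hle
  have hub : limsup f atTop ≤ L := by
    refine limsup_le_of_le (by isBoundedDefault) ?_
    filter_upwards [eventually_ge_atTop 1] with n hn
    exact le_iSup₂ (f := fun n (_ : n ∈ Set.Ici 1) => f n) n hn
  have hlb : L ≤ liminf f atTop := iSup₂_le fun k hk => claim1 k hk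
  have h3 : liminf f atTop = L := le_antisymm (le_trans liminf_le_limsup hub) hlb
  have h4 : limsup f atTop = L := le_antisymm hub (le_trans hlb liminf_le_limsup)
  exact tendsto_of_liminf_eq_limsup h3 h4

end FeketeAux

/-- For a sum closed class `C`, the sequence `(|C_n|)` is
supermultiplicative, and consequently the sequence of `n`-th roots converges in `[0,∞]`
to its supremum over `n ≥ 1`; in particular every sum closed class has a (possibly
infinite) growth rate. -/
theorem sum_closed_supermultiplicative_growth_rate
    (C : Set Permu) (hC : IsPermClass C) (hsum : SumClosed C) :
    (∀ m n : ℕ, 1 ≤ m → 1 ≤ n → pcount C m * pcount C n ≤ pcount C (m + n)) ∧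
    Tendsto (fun n : ℕ => (((pcount C n : ℝ) ^ ((n : ℝ)⁻¹) : ℝ) : EReal)) atTop
      (nhds (⨆ n ∈ Set.Ici (1 : ℕ), (((pcount C n : ℝ) ^ ((n : ℝ)⁻¹) : ℝ) : EReal))) := by
  constructor
  · intro m n hm hn
    exact supermult C hsum m n
  · by_cases h1 : pcount C 1 = 0
    · have hz : ∀ n, 1 ≤ n → pcount C n = 0 := fun n hn => pcount_zero C hC h1 hn
      have hfz : ∀ n, 1 ≤ n → (((pcount C n : ℝ) ^ ((n : ℝ)⁻¹) : ℝ) : EReal) = (0 : EReal) := by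
        intro n hn
        have hn0 : ((n : ℝ))⁻¹ ≠ 0 := by
          have : (0:ℝ) < n := by exact_mod_cast hn
          positivity
        rw [hz n hn]
        push_cast
        rw [Real.zero_rpow hn0]
        rfl
      have hL0 : (⨆ n ∈ Set.Ici (1 : ℕ), (((pcount C n : ℝ) ^ ((n : ℝ)⁻¹) : ℝ) : EReal))
          = (0 : EReal) := by
        apply le_antisymm
        · exact iSup₂_le fun n hn => le_of_eq (hfz n hn)
        · calc (0 : EReal) = ((((pcount C 1 : ℝ)) ^ (((1 : ℕ) : ℝ))⁻¹ : ℝ) : EReal) :=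
              (hfz 1 le_rfl).symm
            _ ≤ _ := le_iSup₂ (f := fun n (_ : n ∈ Set.Ici 1) =>
                (((pcount C n : ℝ) ^ ((n : ℝ)⁻¹) : ℝ) : EReal)) 1 (Set.mem_Ici.2 le_rfl)
      rw [hL0]
      apply Tendsto.congr' _ tendsto_const_nhds
      filter_upwards [eventually_ge_atTop 1] with n hn
      exact (hfz n hn).symm
    · exact fekete (pcount C) (fun m n _ _ => supermult C hsum m n) (by omega)
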